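/- U is differentiable on (a_1,a_2) with U'(t) = f_1(t)·(b_2 − t − b_2·F_1(t)). Moreover the function t ↦ b_2 − t − b_2·F_1(t) is strictly decreasing on [a_1,a_2], positive at a_1 and negative at a_2, so there is a unique t_0 ∈ (a_1,a_2) with b_2 − t_0 − b_2·F_1(t_0) = 0, and U attains its maximum over [a_1,a_2] uniquely at t_0. -/

import Mathlib

set_option maxHeartbeats 1000000

open Set intervalIntegral MeasureTheory

/-- The all-pay leader utility
`U t = ∫_t^{a₂} f₁ x·(x − b₂·F₁ x) dx + b₂·F₁ t·(1 − F₁ t)` is differentiable on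
`(a₁,a₂)` with `U' t = f₁ t·(b₂ − t − b₂·F₁ t)`; the map
`t ↦ b₂ − t − b₂·F₁ t` is strictly decreasing on `[a₁,a₂]`, positive at `a₁` and
negative at `a₂`, so there is a unique `t₀ ∈ (a₁,a₂)` with
`b₂ − t₀ − b₂·F₁ t₀ = 0`, and `U` attains its maximum over `[a₁,a₂]` uniquely
at `t₀`. -/
theorem all_pay_cutoff_optimal
    (a1 a2 b2 : ℝ) (ha1 : 0 ≤ a1) (ha : a1 < a2) (hb2a : a1 < b2) (hb2 : 0 < b2)
    (f1 F1 : ℝ → ℝ)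
    (hf1_cont : ContinuousOn f1 (Set.Icc a1 a2))
    (hf1_pos : ∀ x ∈ Set.Icc a1 a2, 0 < f1 x)
    (hF1 : ∀ x, F1 x = ∫ t in a1..x, f1 t)
    (hF1a2 : F1 a2 = 1)
    (U : ℝ → ℝ)
    (hUdef : ∀ t, U t = (∫ x in t..a2, f1 x * (x - b2 * F1 x)) + b2 * F1 t * (1 - F1 t)) :
    (∀ t ∈ Set.Ioo a1 a2, HasDerivAt U (f1 t * (b2 - t - b2 * F1 t)) t) ∧
    StrictAntiOn (fun t => b2 - t - b2 * F1 t) (Set.Icc a1 a2) ∧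
    0 < b2 - a1 - b2 * F1 a1 ∧
    b2 - a2 - b2 * F1 a2 < 0 ∧
    (∃! t0 : ℝ, t0 ∈ Set.Ioo a1 a2 ∧ b2 - t0 - b2 * F1 t0 = 0) ∧
    (∀ t0 ∈ Set.Ioo a1 a2, b2 - t0 - b2 * F1 t0 = 0 →
      ∀ t ∈ Set.Icc a1 a2, t ≠ t0 → U t < U t0) := by
  have hF1eq : F1 = fun x => ∫ t in a1..x, f1 t := funext hF1
  have hF1a1 : F1 a1 = 0 := by simp [hF1]
  -- interval integrability of f1 between points of Icc a1 a2
  have hint : ∀ x ∈ Set.Icc a1 a2, ∀ y ∈ Set.Icc a1 a2,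
      IntervalIntegrable f1 MeasureTheory.volume x y := by
    intro x hx y hy
    exact (hf1_cont.mono (Set.uIcc_subset_Icc hx hy)).intervalIntegrable
  -- continuity of F1 on Icc
  have hcont_F1 : ContinuousOn F1 (Set.Icc a1 a2) := by
    rw [hF1eq, ← Set.uIcc_of_le ha.le]
    apply intervalIntegral.continuousOn_primitive_interval
    rw [Set.uIcc_of_le ha.le]
    exact hf1_cont.integrableOn_Icc
  -- monotonicity of F1
  have hF1mono : MonotoneOn F1 (Set.Icc a1 a2) := by
    intro x hx y hy hxy
    have hadd := intervalIntegral.integral_add_adjacent_intervals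
      (hint a1 (Set.left_mem_Icc.2 ha.le) x hx) (hint x hx y hy)
    have hnn : 0 ≤ ∫ t in x..y, f1 t := by
      apply intervalIntegral.integral_nonneg hxy
      intro u hu
      exact (hf1_pos u ⟨le_trans hx.1 hu.1, le_trans hu.2 hy.2⟩).le
    have : F1 y = F1 x + ∫ t in x..y, f1 t := by
      rw [hF1 x, hF1 y]; linarith [hadd]
    linarith
  -- strict anti
  have hganti : StrictAntiOn (fun t => b2 - t - b2 * F1 t) (Set.Icc a1 a2) := by
    intro x hx y hy hxy
    have h1 : F1 x ≤ F1 y := hF1mono hx hy hxy.le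
    simp only
    nlinarith
  -- sign at endpoints
  have hga1 : 0 < b2 - a1 - b2 * F1 a1 := by rw [hF1a1]; linarith
  have hga2 : b2 - a2 - b2 * F1 a2 < 0 := by rw [hF1a2]; linarith
  -- continuity of g
  have hgcont : ContinuousOn (fun t => b2 - t - b2 * F1 t) (Set.Icc a1 a2) :=
    (continuousOn_const.sub continuousOn_id).sub (continuousOn_const.mul hcont_F1)
  -- existence of root
  obtain ⟨t0, ht0mem, hgt0⟩ : ∃ t0 ∈ Set.Ioo a1 a2, b2 - t0 - b2 * F1 t0 = 0 := by
    have h0 : (0:ℝ) ∈ Set.Ioo (b2 - a2 - b2 * F1 a2) (b2 - a1 - b2 * F1 a1) := ⟨hga2, hga1⟩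
    have := intermediate_value_Ioo' ha.le hgcont h0
    obtain ⟨t0, ht0, h⟩ := this
    exact ⟨t0, ht0, h⟩
  -- derivative
  have hderiv : ∀ t ∈ Set.Ioo a1 a2, HasDerivAt U (f1 t * (b2 - t - b2 * F1 t)) t := by
    intro t ht
    have htIcc : t ∈ Set.Icc a1 a2 := Set.Ioo_subset_Icc_self ht
    have hnhds : Set.Icc a1 a2 ∈ nhds t := Icc_mem_nhds ht.1 ht.2
    have hF1d : HasDerivAt F1 (f1 t) t := by
      rw [hF1eq]
      exact intervalIntegral.integral_hasDerivAt_right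
        (hint a1 (Set.left_mem_Icc.2 ha.le) t htIcc)
        ⟨Set.Icc a1 a2, hnhds, hf1_cont.aestronglyMeasurable measurableSet_Icc⟩
        (hf1_cont.continuousAt hnhds)
    have hhcont : ContinuousOn (fun x => f1 x * (x - b2 * F1 x)) (Set.Icc a1 a2) :=
      hf1_cont.mul (continuousOn_id.sub (continuousOn_const.mul hcont_F1))
    have hId : HasDerivAt (fun u => ∫ x in u..a2, f1 x * (x - b2 * F1 x))
        (-(f1 t * (t - b2 * F1 t))) t := by
      exact intervalIntegral.integral_hasDerivAt_left
        ((hhcont.mono (Set.uIcc_subset_Icc htIcc (Set.right_mem_Icc.2 ha.le))).intervalIntegrable)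
        ⟨Set.Icc a1 a2, hnhds, hhcont.aestronglyMeasurable measurableSet_Icc⟩
        (hhcont.continuousAt hnhds)
    have h2 : HasDerivAt (fun u => b2 * F1 u * (1 - F1 u))
        ((b2 * f1 t) * (1 - F1 t) + (b2 * F1 t) * (0 - f1 t)) t :=
      (hF1d.const_mul b2).mul ((hasDerivAt_const t (1:ℝ)).sub hF1d)
    have hU : U = fun u => (∫ x in u..a2, f1 x * (x - b2 * F1 x)) + b2 * F1 u * (1 - F1 u) :=
      funext hUdef
    rw [hU]
    convert hId.add h2 using 1
    · rfl
    · rfl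
    · rfl
    · ring
  refine ⟨hderiv, hganti, hga1, hga2,
    ⟨t0, ⟨ht0mem, hgt0⟩, ?_⟩, ?_⟩
  · rintro y ⟨hy, hgy⟩
    exact hganti.injOn (Set.Ioo_subset_Icc_self hy) (Set.Ioo_subset_Icc_self ht0mem)
      (by rw [hgy, hgt0])
  · -- maximality
    intro s hs hgs t ht htne
    have hsIcc : s ∈ Set.Icc a1 a2 := Set.Ioo_subset_Icc_self hs
    -- continuity of U
    have hhcont : ContinuousOn (fun x => f1 x * (x - b2 * F1 x)) (Set.Icc a1 a2) :=
      hf1_cont.mul (continuousOn_id.sub (continuousOn_const.mul hcont_F1))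
    have hhint : ∀ x ∈ Set.Icc a1 a2, ∀ y ∈ Set.Icc a1 a2,
        IntervalIntegrable (fun x => f1 x * (x - b2 * F1 x)) MeasureTheory.volume x y := by
      intro x hx y hy
      exact (hhcont.mono (Set.uIcc_subset_Icc hx hy)).intervalIntegrable
    have hUV : Set.EqOn U (fun u => ((∫ x in a1..a2, f1 x * (x - b2 * F1 x))
        - ∫ x in a1..u, f1 x * (x - b2 * F1 x)) + b2 * F1 u * (1 - F1 u))
        (Set.Icc a1 a2) := by
      intro u hu
      have hadd := intervalIntegral.integral_add_adjacent_intervals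
        (hhint a1 (Set.left_mem_Icc.2 ha.le) u hu) (hhint u hu a2 (Set.right_mem_Icc.2 ha.le))
      rw [hUdef u]
      simp only
      linarith
    have hVcont : ContinuousOn (fun u => ((∫ x in a1..a2, f1 x * (x - b2 * F1 x))
        - ∫ x in a1..u, f1 x * (x - b2 * F1 x)) + b2 * F1 u * (1 - F1 u))
        (Set.Icc a1 a2) := by
      apply ContinuousOn.add
      · apply continuousOn_const.sub
        rw [← Set.uIcc_of_le ha.le]
        apply intervalIntegral.continuousOn_primitive_interval
        rw [Set.uIcc_of_le ha.le]
        exact hhcont.integrableOn_Icc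
      · exact (continuousOn_const.mul hcont_F1).mul (continuousOn_const.sub hcont_F1)
    have hUcont : ContinuousOn U (Set.Icc a1 a2) := hVcont.congr hUV
    -- strict mono on [a1, s]
    have hmono : StrictMonoOn U (Set.Icc a1 s) := by
      apply strictMonoOn_of_deriv_pos (convex_Icc a1 s)
        (hUcont.mono (Set.Icc_subset_Icc_right hsIcc.2))
      intro x hx
      rw [interior_Icc] at hx
      have hx' : x ∈ Set.Ioo a1 a2 := ⟨hx.1, hx.2.trans hs.2⟩
      rw [(hderiv x hx').deriv]
      have hgx : (0:ℝ) < b2 - x - b2 * F1 x := by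
        have := hganti (Set.Ioo_subset_Icc_self hx') hsIcc hx.2
        simp only at this
        linarith
      exact mul_pos (hf1_pos x (Set.Ioo_subset_Icc_self hx')) hgx
    -- strict anti on [s, a2]
    have hanti : StrictAntiOn U (Set.Icc s a2) := by
      apply strictAntiOn_of_deriv_neg (convex_Icc s a2)
        (hUcont.mono (Set.Icc_subset_Icc_left hsIcc.1))
      intro x hx
      rw [interior_Icc] at hx
      have hx' : x ∈ Set.Ioo a1 a2 := ⟨hs.1.trans hx.1, hx.2⟩
      rw [(hderiv x hx').deriv]
      have hgx : b2 - x - b2 * F1 x < 0 := by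
        have := hganti hsIcc (Set.Ioo_subset_Icc_self hx') hx.1
        simp only at this
        linarith
      exact mul_neg_of_pos_of_neg (hf1_pos x (Set.Ioo_subset_Icc_self hx')) hgx
    rcases lt_or_gt_of_ne htne with hlt | hgt
    · exact hmono ⟨ht.1, hlt.le⟩ ⟨hs.1.le, le_refl s⟩ hlt
    · exact hanti ⟨le_refl s, hs.2.le⟩ ⟨hgt.le, ht.2⟩ hgt
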